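/- arXiv:1807.02375 — 2 statements merged into one kernel-verified Lean document; each statement's English description precedes it below -/
import Mathlib

section
/- Let r ≥ 1 and k ≥ 0 be integers, let A₀ = ℚ[x₁, …, x_r] be the multivariate polynomial ring, let f = x₁⋯x_r, and let A be the localization of A₀ away from f. For each 1 ≤ i ≤ r, let dᵢ : A → A be a derivation whose restriction along the localization map A₀ → A is the partial derivative ∂/∂xᵢ. Let M_k be the A₀-submodule of A generated by all elements (d_{i₁} ∘ ⋯ ∘ d_{i_j})(1/f) with 0 ≤ j ≤ k (allowing repetitions and any order of indices, the empty composition being the identity), and let J_k be the ideal of A₀ generated by the monomials x₁^{a₁}⋯x_r^{a_r} with 0 ≤ aᵢ ≤ k for all i and a₁ + ⋯ + a_r = k(r−1). Then M_k = { (the image in A of h)·(1/f)^{k+1} : h ∈ J_k }, i.e. M_k equals f^{−(k+1)} times the image of J_k in A. -/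
open MvPolynomial

noncomputable section

/-- The polynomial `f = x₁ ⋯ x_r` in `A₀ = ℚ[x₁, …, x_r]`. -/
def fProd (r : ℕ) : MvPolynomial (Fin r) ℚ := ∏ i, X i

/-- `A`, the localization of `A₀` away from `f`. -/
abbrev Aloc (r : ℕ) := Localization.Away (fProd r)

/-- The inverse `1/f` in `A` of the image of `f`. -/
def invF (r : ℕ) : Aloc r :=
  Ring.inverse (algebraMap (MvPolynomial (Fin r) ℚ) (Aloc r) (fProd r))

/-- Composite application `d_{i₁} ∘ ⋯ ∘ d_{i_j}` of the derivations indexed by a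
list, applied to an element of `A`; the empty list gives the identity. -/
def applyDerivs {r : ℕ} (d : Fin r → Derivation ℚ (Aloc r) (Aloc r)) :
    List (Fin r) → Aloc r → Aloc r
  | [], x => x
  | i :: l, x => d i (applyDerivs d l x)

namespace HodgeAux

variable {r : ℕ}

lemma isUnit_X (i : Fin r) :
    IsUnit (algebraMap (MvPolynomial (Fin r) ℚ) (Aloc r) (X i)) :=
  IsLocalization.Away.isUnit_of_dvd (fProd r)
    (Finset.dvd_prod_of_mem _ (Finset.mem_univ i))

/-- The inverse of the image of `X i` in `A`. -/
def uu (r : ℕ) (i : Fin r) : Aloc r :=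
  Ring.inverse (algebraMap (MvPolynomial (Fin r) ℚ) (Aloc r) (X i))

lemma X_mul_uu (i : Fin r) :
    algebraMap (MvPolynomial (Fin r) ℚ) (Aloc r) (X i) * uu r i = 1 :=
  Ring.mul_inverse_cancel _ (isUnit_X i)

lemma pow_cancel (i : Fin r) (a b : ℕ) :
    algebraMap (MvPolynomial (Fin r) ℚ) (Aloc r) (X i) ^ a * uu r i ^ (a + b)
      = uu r i ^ b := by
  rw [pow_add, ← mul_assoc, ← mul_pow, X_mul_uu, one_pow, one_mul]

lemma invF_eq : invF r = ∏ i, uu r i := by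
  have h : algebraMap (MvPolynomial (Fin r) ℚ) (Aloc r) (fProd r) * ∏ i, uu r i = 1 := by
    show algebraMap (MvPolynomial (Fin r) ℚ) (Aloc r) (∏ i, X i) * ∏ i, uu r i = 1
    rw [map_prod, ← Finset.prod_mul_distrib]
    simp [X_mul_uu]
  have hu : IsUnit (algebraMap (MvPolynomial (Fin r) ℚ) (Aloc r) (fProd r)) :=
    IsLocalization.Away.algebraMap_isUnit _
  calc invF r = invF r * (algebraMap (MvPolynomial (Fin r) ℚ) (Aloc r) (fProd r)
        * ∏ i, uu r i) := by rw [h, mul_one]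
    _ = (Ring.inverse (algebraMap (MvPolynomial (Fin r) ℚ) (Aloc r) (fProd r))
        * algebraMap (MvPolynomial (Fin r) ℚ) (Aloc r) (fProd r)) * ∏ i, uu r i := by
        rw [invF]; ring
    _ = ∏ i, uu r i := by rw [Ring.inverse_mul_cancel _ hu, one_mul]

/-- The Laurent monomial `∏ xᵢ^{-(1+cᵢ)}`. -/
def mC (r : ℕ) (c : Fin r → ℕ) : Aloc r := ∏ i, uu r i ^ (1 + c i)

lemma mC_zero : mC r (fun _ => 0) = invF r := by
  rw [invF_eq]; simp [mC]

lemma X_pow_mul_mC (i : Fin r) (c : Fin r → ℕ) (n : ℕ) :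
    algebraMap (MvPolynomial (Fin r) ℚ) (Aloc r) (X i ^ n)
      * mC r (fun j => c j + if i = j then n else 0) = mC r c := by
  classical
  rw [map_pow, mC, mC,
    ← Finset.mul_prod_erase Finset.univ (fun j => uu r j ^ (1 + (c j + if i = j then n else 0)))
      (Finset.mem_univ i),
    ← Finset.mul_prod_erase Finset.univ (fun j => uu r j ^ (1 + c j)) (Finset.mem_univ i)]
  have h2 : (∏ j ∈ Finset.univ.erase i, uu r j ^ (1 + (c j + if i = j then n else 0)))
      = ∏ j ∈ Finset.univ.erase i, uu r j ^ (1 + c j) :=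
    Finset.prod_congr rfl fun j hj => by
      rw [if_neg (Ne.symm (Finset.ne_of_mem_erase hj)), add_zero]
  rw [h2, if_pos rfl, ← mul_assoc]
  congr 1
  have e : 1 + (c i + n) = n + (1 + c i) := by ring
  rw [e, pow_cancel]

variable (d : Fin r → Derivation ℚ (Aloc r) (Aloc r))
  (hd : ∀ (i : Fin r) (p : MvPolynomial (Fin r) ℚ),
      d i (algebraMap (MvPolynomial (Fin r) ℚ) (Aloc r) p) =
        algebraMap (MvPolynomial (Fin r) ℚ) (Aloc r) (pderiv i p))

include hd

lemma d_uu (i j : Fin r) : d i (uu r j) = if j = i then -(uu r j ^ 2) else 0 := by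
  have h0 := congrArg (d i) (X_mul_uu (r := r) j)
  rw [Derivation.leibniz, Derivation.map_one_eq_zero, hd, pderiv_X,
    smul_eq_mul, smul_eq_mul] at h0
  rcases eq_or_ne j i with rfl | hne
  · rw [if_pos rfl]
    rw [Pi.single_eq_same, map_one, mul_one] at h0
    have h1 : uu r j * (algebraMap (MvPolynomial (Fin r) ℚ) (Aloc r) (X j) * d j (uu r j)
        + uu r j) = uu r j * 0 := by rw [h0]
    rw [mul_zero, mul_add, ← mul_assoc,
      mul_comm (uu r j) (algebraMap (MvPolynomial (Fin r) ℚ) (Aloc r) (X j)),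
      X_mul_uu, one_mul] at h1
    have h2 := eq_neg_of_add_eq_zero_left h1
    rw [h2]; ring
  · rw [if_neg hne]
    rw [Pi.single_eq_of_ne hne, map_zero, mul_zero, add_zero] at h0
    have h1 : uu r j * (algebraMap (MvPolynomial (Fin r) ℚ) (Aloc r) (X j) * d i (uu r j))
        = 0 := by rw [h0, mul_zero]
    rwa [← mul_assoc, mul_comm (uu r j), X_mul_uu, one_mul] at h1

omit hd in
lemma d_prod_eq_zero (D : Derivation ℚ (Aloc r) (Aloc r)) (s : Finset (Fin r))
    (g : Fin r → Aloc r) (h : ∀ j ∈ s, D (g j) = 0) : D (∏ j ∈ s, g j) = 0 := by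
  classical
  induction s using Finset.induction_on with
  | empty => simp
  | insert _ _ hj ih =>
      rw [Finset.prod_insert hj, Derivation.leibniz, h _ (Finset.mem_insert_self _ _),
        ih fun j hjs => h _ (Finset.mem_insert_of_mem hjs), smul_zero, smul_zero, add_zero]

lemma d_mC (i : Fin r) (c : Fin r → ℕ) :
    d i (mC r c) = -((c i : Aloc r) + 1) * mC r (fun j => c j + if i = j then 1 else 0) := by
  classical
  rw [mC, ← Finset.mul_prod_erase Finset.univ (fun j => uu r j ^ (1 + c j)) (Finset.mem_univ i),
    Derivation.leibniz,
    d_prod_eq_zero (d i) _ _ (fun j hj => by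
      rw [Derivation.leibniz_pow, d_uu d hd, if_neg (Finset.ne_of_mem_erase hj)]
      simp),
    smul_zero, zero_add, Derivation.leibniz_pow, d_uu d hd, if_pos rfl]
  rw [mC, ← Finset.mul_prod_erase Finset.univ
    (fun j => uu r j ^ (1 + (c j + if i = j then 1 else 0))) (Finset.mem_univ i)]
  have h2 : (∏ j ∈ Finset.univ.erase i, uu r j ^ (1 + (c j + if i = j then 1 else 0)))
      = ∏ j ∈ Finset.univ.erase i, uu r j ^ (1 + c j) :=
    Finset.prod_congr rfl fun j hj => by
      rw [if_neg (Ne.symm (Finset.ne_of_mem_erase hj)), add_zero]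
  rw [h2, if_pos rfl]
  simp only [smul_eq_mul, nsmul_eq_mul]
  have e1 : 1 + c i - 1 = c i := by omega
  rw [e1]
  push_cast
  ring

omit hd in
lemma coeff_ne (l : List (Fin r)) :
    ((-1 : ℚ)) ^ l.length * ∏ i, ((l.count i).factorial : ℚ) ≠ 0 := by
  apply mul_ne_zero (pow_ne_zero _ (by norm_num))
  exact Finset.prod_ne_zero_iff.mpr fun i _ =>
    Nat.cast_ne_zero.mpr (Nat.factorial_ne_zero _)

lemma applyDerivs_eq (l : List (Fin r)) :
    applyDerivs d l (invF r) =
      algebraMap (MvPolynomial (Fin r) ℚ) (Aloc r)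
          (C ((-1) ^ l.length * ∏ i, ((l.count i).factorial : ℚ)))
        * mC r (fun i => l.count i) := by
  classical
  induction l with
  | nil => simp [applyDerivs, mC_zero]
  | cons a l ih =>
      have hcount : ∀ j : Fin r, (a :: l).count j = l.count j + if a = j then 1 else 0 := by
        intro j; simp [List.count_cons]
      have hfact : (∏ i, (((a :: l).count i).factorial : ℚ))
          = ((l.count a : ℚ) + 1) * ∏ i, ((l.count i).factorial : ℚ) := by
        rw [← Finset.mul_prod_erase Finset.univ (fun i => (((a :: l).count i).factorial : ℚ))
            (Finset.mem_univ a),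
          ← Finset.mul_prod_erase Finset.univ (fun i => ((l.count i).factorial : ℚ))
            (Finset.mem_univ a)]
        have h1 : (∏ j ∈ Finset.univ.erase a, (((a :: l).count j).factorial : ℚ))
            = ∏ j ∈ Finset.univ.erase a, ((l.count j).factorial : ℚ) :=
          Finset.prod_congr rfl fun j hj => by
            rw [hcount j, if_neg (Ne.symm (Finset.ne_of_mem_erase hj)), add_zero]
        rw [h1, hcount a, if_pos rfl, Nat.factorial_succ]
        push_cast
        ring
      have hψ : (-(((l.count a : Aloc r)) + 1))
          = algebraMap (MvPolynomial (Fin r) ℚ) (Aloc r)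
              (C (-((l.count a : ℚ) + 1))) := by
        simp [map_neg, map_add, map_one, map_natCast]
      calc applyDerivs d (a :: l) (invF r)
          = d a (algebraMap (MvPolynomial (Fin r) ℚ) (Aloc r)
              (C ((-1) ^ l.length * ∏ i, ((l.count i).factorial : ℚ)))
            * mC r (fun i => l.count i)) := by rw [applyDerivs, ih]
        _ = algebraMap (MvPolynomial (Fin r) ℚ) (Aloc r)
              (C ((-1) ^ l.length * ∏ i, ((l.count i).factorial : ℚ)))
            * d a (mC r (fun i => l.count i)) := by
            rw [Derivation.leibniz, hd, pderiv_C, map_zero, smul_zero, add_zero, smul_eq_mul]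
        _ = algebraMap (MvPolynomial (Fin r) ℚ) (Aloc r)
              (C ((-1) ^ l.length * ∏ i, ((l.count i).factorial : ℚ)))
            * (algebraMap (MvPolynomial (Fin r) ℚ) (Aloc r) (C (-((l.count a : ℚ) + 1)))
              * mC r (fun j => l.count j + if a = j then 1 else 0)) := by
            rw [d_mC d hd, hψ]
        _ = algebraMap (MvPolynomial (Fin r) ℚ) (Aloc r)
              (C ((-1) ^ (a :: l).length * ∏ i, (((a :: l).count i).factorial : ℚ)))
            * mC r (fun i => (a :: l).count i) := by
            have hc : (fun j => l.count j + if a = j then 1 else 0)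
                = fun i => (a :: l).count i := funext fun j => (hcount j).symm
            rw [hc, ← mul_assoc, ← map_mul, ← map_mul]
            congr 2
            rw [hfact, List.length_cons, pow_succ]
            ring_nf

omit hd

lemma C_mul_mem_iff (p : Submodule (MvPolynomial (Fin r) ℚ) (Aloc r)) {q : ℚ} (hq : q ≠ 0)
    (x : Aloc r) :
    algebraMap (MvPolynomial (Fin r) ℚ) (Aloc r) (C q) * x ∈ p ↔ x ∈ p := by
  have key : ∀ (t : ℚ) (y : Aloc r), y ∈ p →
      algebraMap (MvPolynomial (Fin r) ℚ) (Aloc r) (C t) * y ∈ p := fun t y hy => by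
    rw [← Algebra.smul_def]; exact p.smul_mem _ hy
  constructor
  · intro h
    have h2 := key q⁻¹ _ h
    rwa [← mul_assoc, ← map_mul, ← map_mul, inv_mul_cancel₀ hq, map_one, map_one, one_mul] at h2
  · exact key q x

lemma algMul_mem (p : Submodule (MvPolynomial (Fin r) ℚ) (Aloc r))
    (g : MvPolynomial (Fin r) ℚ) {x : Aloc r} (hx : x ∈ p) :
    algebraMap (MvPolynomial (Fin r) ℚ) (Aloc r) g * x ∈ p := by
  rw [← Algebra.smul_def]; exact p.smul_mem g hx

lemma sum_count (l : List (Fin r)) : ∑ i, l.count i = l.length := by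
  induction l with
  | nil => simp
  | cons a l ih => simp [List.count_cons, Finset.sum_add_distrib, ih]

/-- A list with prescribed multiplicities. -/
def listOf (c : Fin r → ℕ) : List (Fin r) :=
  (List.finRange r).flatMap fun i => List.replicate (c i) i

lemma count_listOf (c : Fin r → ℕ) (j : Fin r) : (listOf c).count j = c j := by
  classical
  rw [listOf, List.count_flatMap, ← Fin.sum_univ_def]
  simp [List.count_replicate]

lemma length_listOf (c : Fin r → ℕ) : (listOf c).length = ∑ i, c i := by
  rw [listOf, List.length_flatMap, ← Fin.sum_univ_def]
  simp

lemma phi_monomial (k : ℕ) (a : Fin r → ℕ) (ha : ∀ i, a i ≤ k) :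
    algebraMap (MvPolynomial (Fin r) ℚ) (Aloc r) (∏ i, X i ^ a i) * invF r ^ (k + 1)
      = mC r (fun i => k - a i) := by
  rw [invF_eq, ← Finset.prod_pow, map_prod, ← Finset.prod_mul_distrib, mC]
  refine Finset.prod_congr rfl fun i _ => ?_
  rw [map_pow]
  have e : k + 1 = a i + (1 + (k - a i)) := by have := ha i; omega
  rw [e, pow_cancel]

end HodgeAux

open HodgeAux in
/-- Normal crossings computation of the Hodge filtration. -/
theorem hodge_filtration_snc (r k : ℕ) (hr : 1 ≤ r)
    (d : Fin r → Derivation ℚ (Aloc r) (Aloc r))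
    (hd : ∀ (i : Fin r) (p : MvPolynomial (Fin r) ℚ),
      d i (algebraMap (MvPolynomial (Fin r) ℚ) (Aloc r) p) =
        algebraMap (MvPolynomial (Fin r) ℚ) (Aloc r) (pderiv i p)) :
    (Submodule.span (MvPolynomial (Fin r) ℚ)
        {x : Aloc r | ∃ l : List (Fin r), l.length ≤ k ∧ x = applyDerivs d l (invF r)} :
      Set (Aloc r)) =
    (fun h : MvPolynomial (Fin r) ℚ =>
        algebraMap (MvPolynomial (Fin r) ℚ) (Aloc r) h * invF r ^ (k + 1)) ''
      (Ideal.span {m : MvPolynomial (Fin r) ℚ | ∃ a : Fin r → ℕ,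
          (∀ i, a i ≤ k) ∧ (∑ i, a i) = k * (r - 1) ∧ m = ∏ i, X i ^ a i} :
        Set (MvPolynomial (Fin r) ℚ)) := by
  classical
  set i0 : Fin r := ⟨0, hr⟩ with hi0
  set gens : Set (MvPolynomial (Fin r) ℚ) := {m : (MvPolynomial (Fin r) ℚ) | ∃ a : Fin r → ℕ,
      (∀ i, a i ≤ k) ∧ (∑ i, a i) = k * (r - 1) ∧ m = ∏ i, X i ^ a i} with hgens
  set φ : (MvPolynomial (Fin r) ℚ) →ₗ[(MvPolynomial (Fin r) ℚ)] Aloc r := LinearMap.toSpanSingleton (MvPolynomial (Fin r) ℚ) (Aloc r) (invF r ^ (k + 1)) with hφdef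
  have hφ : (fun h : (MvPolynomial (Fin r) ℚ) => algebraMap (MvPolynomial (Fin r) ℚ) (Aloc r) h * invF r ^ (k + 1)) = ⇑φ := by
    funext h
    rw [hφdef, LinearMap.toSpanSingleton_apply]
    exact (Algebra.smul_def h _).symm
  rw [hφ, ← Submodule.map_coe φ]
  suffices hmain : Submodule.span (MvPolynomial (Fin r) ℚ)
      {x : Aloc r | ∃ l : List (Fin r), l.length ≤ k ∧ x = applyDerivs d l (invF r)}
      = Submodule.map φ (Ideal.span gens) by rw [hmain]
  rw [← Ideal.submodule_span_eq, Submodule.map_span]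
  -- the image of the generating set
  have himg : ⇑φ '' gens = {x : Aloc r | ∃ c : Fin r → ℕ, (∑ i, c i) = k ∧ x = mC r c} := by
    ext x
    constructor
    · rintro ⟨m, ⟨a, ha, hsa, rfl⟩, rfl⟩
      refine ⟨fun i => k - a i, ?_, ?_⟩
      · show (∑ i, (k - a i)) = k
        have hsum : (∑ i, (k - a i)) + ∑ i, a i = r * k := by
          rw [← Finset.sum_add_distrib]
          have : ∀ i ∈ Finset.univ, (k - a i) + a i = k := fun i _ => by
            have := ha i; omega
          rw [Finset.sum_congr rfl this]
          simp [Finset.card_univ, mul_comm]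
        have hk : k * (r - 1) + k = r * k := by
          obtain ⟨r', rfl⟩ : ∃ r', r = r' + 1 := ⟨r - 1, by omega⟩
          rw [Nat.add_sub_cancel]
          ring
        omega
      · rw [hφdef, LinearMap.toSpanSingleton_apply]
        exact (Algebra.smul_def _ _).trans (phi_monomial k a ha)
    · rintro ⟨c, hc, rfl⟩
      have hci : ∀ i, c i ≤ k := fun i => by
        have := Finset.single_le_sum (f := c) (fun j _ => Nat.zero_le _) (Finset.mem_univ i)
        omega
      refine ⟨∏ i, X i ^ (k - c i), ⟨fun i => k - c i,
          fun i => by show k - c i ≤ k; omega, ?_, rfl⟩, ?_⟩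
      · show (∑ i, (k - c i)) = k * (r - 1)
        have hsum : (∑ i, (k - c i)) + ∑ i, c i = r * k := by
          rw [← Finset.sum_add_distrib]
          have : ∀ i ∈ Finset.univ, (k - c i) + c i = k := fun i _ => by
            have := hci i; omega
          rw [Finset.sum_congr rfl this]
          simp [Finset.card_univ, mul_comm]
        have hk : k * (r - 1) + k = r * k := by
          obtain ⟨r', rfl⟩ : ∃ r', r = r' + 1 := ⟨r - 1, by omega⟩
          rw [Nat.add_sub_cancel]
          ring
        omega
      · rw [hφdef, LinearMap.toSpanSingleton_apply]
        refine (Algebra.smul_def (∏ i, X i ^ (k - c i)) (invF r ^ (k + 1))).trans ?_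
        rw [phi_monomial k _ (fun i => by show k - c i ≤ k; omega)]
        congr 1
        funext i
        have := hci i
        omega
  rw [himg]
  apply le_antisymm
  · rw [Submodule.span_le]
    rintro x ⟨l, hlen, rfl⟩
    rw [SetLike.mem_coe, applyDerivs_eq d hd l, C_mul_mem_iff _ (coeff_ne l)]
    have hsum := sum_count l
    have hkey := X_pow_mul_mC (r := r) i0 (fun i => l.count i) (k - l.length)
    rw [← hkey]
    apply algMul_mem
    apply Submodule.subset_span
    refine ⟨_, ?_, rfl⟩
    rw [Finset.sum_add_distrib, hsum]
    simp only [Finset.sum_ite_eq, Finset.mem_univ, if_true]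
    omega
  · rw [Submodule.span_le]
    rintro x ⟨c, hc, rfl⟩
    have hcnt : (fun i => (listOf c).count i) = c := funext fun i => count_listOf c i
    have hlen : (listOf c).length = k := by rw [length_listOf, hc]
    have happ := applyDerivs_eq d hd (listOf c)
    rw [hcnt] at happ
    rw [SetLike.mem_coe, ← C_mul_mem_iff (q := (-1) ^ (listOf c).length
        * ∏ i, (((listOf c).count i).factorial : ℚ)) _ (coeff_ne _) (mC r c), ← happ]
    apply Submodule.subset_span
    exact ⟨listOf c, by omega, rfl⟩

end
end

section
/- Work in the polynomial ring ℚ[x, y]. For a rational number α, let J_α be the ideal generated by x³, x²y², xy³, and y⁴ − (2α+1)·x²·y. Then for any two rational numbers α ≠ α′ with 5/6 < α ≤ 1 and 5/6 < α′ ≤ 1, the ideals J_α and J_{α′} are incomparable: neither J_α ⊆ J_{α′} nor J_{α′} ⊆ J_α holds. -/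
open MvPolynomial

noncomputable section

/-- The ideal `J_α = (x³, x²y², xy³, y⁴ − (2α+1)x²y)` in `ℚ[x, y]`, with
`x = X 0` and `y = X 1`. -/
def Jideal (α : ℚ) : Ideal (MvPolynomial (Fin 2) ℚ) :=
  Ideal.span {X 0 ^ 3, X 0 ^ 2 * X 1 ^ 2, X 0 * X 1 ^ 3,
    X 1 ^ 4 - C (2 * α + 1) * X 0 ^ 2 * X 1}

lemma x2y_not_mem_Jideal (α : ℚ) (hα : 5 / 6 < α) :
    X 0 ^ 2 * X 1 ∉ Jideal α := by
  intro hmem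
  set c : ℚ := 2 * α + 1 with hc
  have hc0 : c ≠ 0 := by rw [hc]; nlinarith
  set I : Ideal (Polynomial ℚ) := Ideal.span {Polynomial.X ^ 17} with hI
  set ψ : MvPolynomial (Fin 2) ℚ →ₐ[ℚ] Polynomial ℚ :=
    aeval ![Polynomial.C c * Polynomial.X ^ 6, Polynomial.C c * Polynomial.X ^ 4] with hψ
  set φ : MvPolynomial (Fin 2) ℚ →+* Polynomial ℚ ⧸ I :=
    (Ideal.Quotient.mk I).comp (ψ : MvPolynomial (Fin 2) ℚ →+* Polynomial ℚ) with hφ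
  have hker : Jideal α ≤ RingHom.ker φ := by
    rw [Jideal, Ideal.span_le]
    rintro g hg
    simp only [Set.mem_insert_iff, Set.mem_singleton_iff] at hg
    have hmemI : ψ g ∈ I := by
      have hX17 : (Polynomial.X : Polynomial ℚ) ^ 17 ∈ I :=
        Ideal.subset_span rfl
      rcases hg with rfl | rfl | rfl | rfl
      · have h1 : ψ (X 0 ^ 3)
            = Polynomial.X ^ 17 * (Polynomial.C (c ^ 3) * Polynomial.X) := by
          simp [hψ, map_pow, Polynomial.C_pow]
          ring
        rw [h1]; exact Ideal.mul_mem_right _ _ hX17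
      · have h1 : ψ (X 0 ^ 2 * X 1 ^ 2)
            = Polynomial.X ^ 17 * (Polynomial.C (c ^ 4) * Polynomial.X ^ 3) := by
          simp [hψ, map_pow, Polynomial.C_pow]
          ring
        rw [h1]; exact Ideal.mul_mem_right _ _ hX17
      · have h1 : ψ (X 0 * X 1 ^ 3)
            = Polynomial.X ^ 17 * (Polynomial.C (c ^ 4) * Polynomial.X) := by
          simp [hψ, map_pow, Polynomial.C_pow]
          ring
        rw [h1]; exact Ideal.mul_mem_right _ _ hX17
      · have h1 : ψ (X 1 ^ 4 - C c * X 0 ^ 2 * X 1) = 0 := by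
          simp [hψ, map_pow, Polynomial.C_pow, Polynomial.algebraMap_eq]
          ring
        rw [h1]; exact I.zero_mem
    simpa [hφ, RingHom.mem_ker, Ideal.Quotient.eq_zero_iff_mem] using hmemI
  have h0 : φ (X 0 ^ 2 * X 1) = 0 := hker hmem
  have h1 : ψ (X 0 ^ 2 * X 1) ∈ I := by
    rwa [hφ, RingHom.comp_apply, Ideal.Quotient.eq_zero_iff_mem] at h0
  have h2 : ψ (X 0 ^ 2 * X 1) = Polynomial.C (c ^ 3) * Polynomial.X ^ 16 := by
    simp [hψ, map_pow, Polynomial.C_pow]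
    ring
  rw [h2, hI, Ideal.mem_span_singleton] at h1
  have hne : (Polynomial.C (c ^ 3) * Polynomial.X ^ 16 : Polynomial ℚ) ≠ 0 :=
    mul_ne_zero (Polynomial.C_ne_zero.mpr (pow_ne_zero 3 hc0))
      (pow_ne_zero 16 Polynomial.X_ne_zero)
  have hdeg := Polynomial.natDegree_le_of_dvd h1 hne
  rw [Polynomial.natDegree_X_pow] at hdeg
  have : (Polynomial.C (c ^ 3) * Polynomial.X ^ 16 : Polynomial ℚ).natDegree = 16 := by
    rw [Polynomial.natDegree_C_mul_X_pow 16 _ (pow_ne_zero 3 hc0)]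
  omega

lemma Jideal_not_le (α α' : ℚ) (hne : α ≠ α') (hα' : 5 / 6 < α') :
    ¬ Jideal α ≤ Jideal α' := by
  intro hle
  have h1 : X 1 ^ 4 - C (2 * α + 1) * X 0 ^ 2 * X 1 ∈ Jideal α' :=
    hle (Ideal.subset_span (by simp [Jideal]))
  have h2 : X 1 ^ 4 - C (2 * α' + 1) * X 0 ^ 2 * X 1 ∈ Jideal α' :=
    Ideal.subset_span (by simp [Jideal])
  have h3 : C (2 * (α - α')) * (X 0 ^ 2 * X 1) ∈ Jideal α' := by
    have h := (Jideal α').sub_mem h2 h1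
    convert h using 1
    rw [show (2 * (α - α') : ℚ) = (2 * α + 1) - (2 * α' + 1) by ring, map_sub]
    ring
  have h4 : X 0 ^ 2 * X 1 ∈ Jideal α' := by
    have h := (Jideal α').mul_mem_left (C (2 * (α - α'))⁻¹) h3
    rwa [← mul_assoc, ← map_mul,
      inv_mul_cancel₀ (by intro h; exact hne (by linarith [sub_eq_zero.mp (by linarith : α - α' = 0)])),
      map_one, one_mul] at h
  exact x2y_not_mem_Jideal α' hα' h4

/-- For `5/6 < α, α′ ≤ 1` with `α ≠ α′`, the ideals `J_α` and `J_{α′}` are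
incomparable: neither contains the other. -/
theorem Jideal_incomparable (α α' : ℚ) (hne : α ≠ α')
    (hα₁ : 5 / 6 < α) (hα₂ : α ≤ 1) (hα'₁ : 5 / 6 < α') (hα'₂ : α' ≤ 1) :
    ¬ Jideal α ≤ Jideal α' ∧ ¬ Jideal α' ≤ Jideal α :=
  ⟨Jideal_not_le α α' hne hα'₁, Jideal_not_le α' α hne.symm hα₁⟩
end
end
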